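/- Let L be a well-founded linear order with least element (i.e., L has no infinite strictly descending sequence) and let A be a nontrivial atomless Boolean algebra. Then there is no injective Boolean algebra homomorphism from A into the interval algebra Int(L). Equivalently, if a nontrivial atomless Boolean algebra embeds into Int(L), then L contains an infinite strictly descending sequence. -/

import Mathlib

/-- The collection of all finite unions of half-open intervals `[a,b)` and final
segments `[a,∞)` in a linear order `L`: the carrier of the interval algebra `Int(L)`,
viewed as a Boolean subalgebra of the powerset of `L`. -/
def IntAlgSets (L : Type*) [LinearOrder L] : Set (Set L) :=
  {S | ∃ I : Set (Set L), I.Finite ∧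
    (∀ A ∈ I, (∃ a b : L, A = Set.Ico a b) ∨ ∃ a : L, A = Set.Ici a) ∧ S = ⋃₀ I}

/-- Any nonempty set that is either an `Ico` or an `Ici` has a least element. -/
private lemma interval_least {L : Type*} [LinearOrder L] {X : Set L}
    (hX : (∃ a b : L, X = Set.Ico a b) ∨ ∃ a : L, X = Set.Ici a)
    (hne : X.Nonempty) : ∃ a, a ∈ X ∧ X ⊆ Set.Ici a := by
  rcases hX with ⟨a, b, rfl⟩ | ⟨a, rfl⟩
  · obtain ⟨y, hy⟩ := hne
    exact ⟨a, ⟨le_refl a, lt_of_le_of_lt hy.1 hy.2⟩, fun z hz => hz.1⟩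
  · exact ⟨a, le_refl a, fun z hz => hz⟩

/-- If two disjoint nonempty members of the interval algebra are given, then one of them
lies entirely below some point of their union. -/
private lemma intAlg_split_below {L : Type*} [LinearOrder L] {B C : Set L}
    (hB : B ∈ IntAlgSets L) (hC : C ∈ IntAlgSets L) (hd : B ∩ C = ∅)
    (hBne : B.Nonempty) (hCne : C.Nonempty) :
    ∃ x ∈ B ∪ C, B ⊆ Set.Iio x ∨ C ⊆ Set.Iio x := by
  classical
  obtain ⟨I, hIf, hIi, rfl⟩ := hB
  obtain ⟨J, hJf, hJi, rfl⟩ := hC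
  set K : Set (Set L) := {X ∈ I ∪ J | X.Nonempty} with hKdef
  have hKf : K.Finite := ((hIf.union hJf).subset (Set.sep_subset _ _))
  have hIJ : ∀ X ∈ I ∪ J, (∃ a b : L, X = Set.Ico a b) ∨ ∃ a : L, X = Set.Ici a := by
    rintro X (hX | hX)
    · exact hIi X hX
    · exact hJi X hX
  -- total least-element function
  have hleast : ∀ X : Set L, ∃ a : L, X ∈ K → a ∈ X ∧ X ⊆ Set.Ici a := by
    intro X
    by_cases hX : X ∈ K
    · obtain ⟨a, ha⟩ := interval_least (hIJ X hX.1) hX.2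
      exact ⟨a, fun _ => ha⟩
    · obtain ⟨y, hy⟩ := hBne
      exact ⟨y, fun h => absurd h hX⟩
  choose ℓ hℓ using hleast
  -- K is nonempty
  have hKne : (hKf.toFinset).Nonempty := by
    obtain ⟨y, X, hXI, hyX⟩ := hBne
    exact ⟨X, hKf.mem_toFinset.2 ⟨Or.inl hXI, y, hyX⟩⟩
  obtain ⟨Xm, hXmK, hXmax⟩ := Finset.exists_max_image hKf.toFinset ℓ hKne
  rw [Set.Finite.mem_toFinset] at hXmK
  set x := ℓ Xm with hxdef
  have hxXm : x ∈ Xm := (hℓ Xm hXmK).1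
  -- convexity step: any nonempty interval from the family containing a point `≥ x`
  -- must contain `x` itself.
  have hconv : ∀ X ∈ I ∪ J, ∀ y ∈ X, x ≤ y → x ∈ X := by
    intro X hX y hy hxy
    have hXK : X ∈ K := ⟨hX, y, hy⟩
    have hℓX : ℓ X ≤ x := hXmax X (hKf.mem_toFinset.2 hXK)
    have hℓXmem : ℓ X ∈ X := (hℓ X hXK).1
    rcases hIJ X hX with ⟨a, b, rfl⟩ | ⟨a, rfl⟩
    · exact ⟨le_trans hℓXmem.1 hℓX, lt_of_le_of_lt hxy hy.2⟩
    · exact le_trans hℓXmem hℓX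
  rcases hXmK.1 with hXmI | hXmJ
  · refine ⟨x, Or.inl ⟨Xm, hXmI, hxXm⟩, Or.inr ?_⟩
    rintro y ⟨X, hXJ, hyX⟩
    by_contra hxy
    simp only [Set.mem_Iio, not_lt] at hxy
    have hxX : x ∈ X := hconv X (Or.inr hXJ) y hyX hxy
    have : x ∈ (⋃₀ I) ∩ ⋃₀ J := ⟨⟨Xm, hXmI, hxXm⟩, ⟨X, hXJ, hxX⟩⟩
    rw [hd] at this
    exact this
  · refine ⟨x, Or.inr ⟨Xm, hXmJ, hxXm⟩, Or.inl ?_⟩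
    rintro y ⟨X, hXI, hyX⟩
    by_contra hxy
    simp only [Set.mem_Iio, not_lt] at hxy
    have hxX : x ∈ X := hconv X (Or.inl hXI) y hyX hxy
    have : x ∈ (⋃₀ I) ∩ ⋃₀ J := ⟨⟨X, hXI, hxX⟩, ⟨Xm, hXmJ, hxXm⟩⟩
    rw [hd] at this
    exact this

/-- In a well-founded linear order, a subset contained strictly below a point of a superset
has strictly smaller order type. -/
private lemma type_lt_of_subset_Iio {L : Type*} [LinearOrder L] [WellFoundedLT L]
    {S T : Set L} (hTS : T ⊆ S) {x : L} (hx : x ∈ S) (hT : T ⊆ Set.Iio x) :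
    Ordinal.type ((· < ·) : T → T → Prop) < Ordinal.type ((· < ·) : S → S → Prop) := by
  have h1 : Ordinal.type ((· < ·) : T → T → Prop)
      ≤ Ordinal.typein ((· < ·) : S → S → Prop) ⟨x, hx⟩ := by
    rw [← Ordinal.type_subrel]
    rw [Ordinal.type_le_iff']
    refine ⟨⟨⟨fun t => ⟨⟨t.1, hTS t.2⟩, hT t.2⟩, ?_⟩, ?_⟩⟩
    · intro a b hab
      simp only [Subtype.mk.injEq] at hab
      exact Subtype.ext (congrArg (fun s => (s.1.1 : L)) hab)
    · intro a b
      exact Iff.rfl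
  exact lt_of_le_of_lt h1 (Ordinal.typein_lt_type _ _)

/-- Let `L` be a linear order with least element having no infinite strictly descending
sequence, and let `A` be a nontrivial atomless Boolean algebra.  Then there is no injective
Boolean algebra homomorphism from `A` into the interval algebra `Int(L)` (i.e. no injective
bounded lattice homomorphism from `A` into the powerset of `L` whose range consists of
elements of `Int(L)`). -/
theorem no_atomless_into_intervalAlgebra (L : Type*) [LinearOrder L] [OrderBot L]
    (hwf : ¬ ∃ g : ℕ → L, StrictAnti g)
    (A : Type*) [BooleanAlgebra A] [Nontrivial A] (hatomless : ∀ a : A, ¬ IsAtom a) :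
    ¬ ∃ f : BoundedLatticeHom A (Set L),
        Function.Injective f ∧ ∀ a : A, f a ∈ IntAlgSets L := by
  rintro ⟨f, hinj, hmem⟩
  classical
  haveI : WellFoundedLT L :=
    ⟨RelEmbedding.wellFounded_iff_isEmpty.mpr
      ⟨fun e => hwf ⟨e, fun a b hab => e.map_rel_iff.2 hab⟩⟩⟩
  -- the ordinal measure
  set μ : A → Ordinal := fun a => Ordinal.type ((· < ·) : ↥(f a) → ↥(f a) → Prop)
    with hμdef
  have hne : ∀ a : A, a ≠ ⊥ → (f a : Set L).Nonempty := by
    intro a ha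
    rw [Set.nonempty_iff_ne_empty]
    intro h
    apply ha
    apply hinj
    rw [h, map_bot]
    rfl
  have step : ∀ a : A, a ≠ ⊥ → ∃ b : A, b ≠ ⊥ ∧ μ b < μ a := by
    intro a ha
    obtain ⟨b, hba, hb⟩ : ∃ b, b < a ∧ b ≠ ⊥ := by
      by_contra h
      push_neg at h
      exact hatomless a ⟨ha, fun b hb => h b hb⟩
    set c := a \ b with hcdef
    have hc : c ≠ ⊥ := by
      intro h
      rw [hcdef, sdiff_eq_bot_iff] at h
      exact absurd (lt_of_lt_of_le hba h) (lt_irrefl b)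
    have hsup : b ⊔ c = a := sup_sdiff_cancel_right hba.le
    have hinf : b ⊓ c = ⊥ := inf_sdiff_self_right
    have hunion : f b ∪ f c = f a := by
      have h : f (b ⊔ c) = f b ⊔ f c := map_sup f b c
      rw [hsup] at h
      exact h.symm
    have hinter : f b ∩ f c = ∅ := by
      have this : f (b ⊓ c) = f b ⊓ f c := map_inf f b c
      rw [hinf, map_bot] at this
      exact this.symm
    obtain ⟨x, hx, hcase⟩ := intAlg_split_below (hmem b) (hmem c) hinter (hne b hb) (hne c hc)
    rw [hunion] at hx
    rcases hcase with hsub | hsub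
    · refine ⟨b, hb, ?_⟩
      exact type_lt_of_subset_Iio (hunion ▸ Set.subset_union_left) hx hsub
    · refine ⟨c, hc, ?_⟩
      exact type_lt_of_subset_Iio (hunion ▸ Set.subset_union_right) hx hsub
  -- build a strictly decreasing sequence of ordinals
  let g : ℕ → {a : A // a ≠ ⊥} := fun n =>
    Nat.rec ⟨⊤, top_ne_bot⟩
      (fun _ p => ⟨(step p.1 p.2).choose, (step p.1 p.2).choose_spec.1⟩) n
  have hdec : ∀ n : ℕ, μ (g (n + 1)).1 < μ (g n).1 := by
    intro n
    exact (step (g n).1 (g n).2).choose_spec.2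
  exact (RelEmbedding.natGT (fun n => μ (g n).1) hdec).not_wellFounded
    Ordinal.lt_wf
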